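/- For every γ > 0, φ(γ) = (e^{−γ/4}/√(πγ)) · ∫_{-∞}^{∞} (e^{x/2}/(e^x + 1)) · e^{−x²/(4γ)} dx. -/

import Mathlib

open Real Filter MeasureTheory

/-- ψ(γ) = E[tanh(L/2)] for L ~ N(γ, 2γ). -/
noncomputable def psi (γ : ℝ) : ℝ :=
  ∫ x : ℝ, Real.tanh (x / 2) * (1 / Real.sqrt (4 * Real.pi * γ)) *
    Real.exp (-(x - γ) ^ 2 / (4 * γ))

/-- φ(γ) = 1 − ψ(γ). -/
noncomputable def phi (γ : ℝ) : ℝ := 1 - psi γ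

theorem phi_integral_form (γ : ℝ) (hγ : 0 < γ) :
    phi γ = (Real.exp (-γ / 4) / Real.sqrt (Real.pi * γ)) *
      ∫ x : ℝ, (Real.exp (x / 2) / (Real.exp x + 1)) * Real.exp (-x ^ 2 / (4 * γ)) := by
  have hb : (0:ℝ) < 1 / (4 * γ) := by positivity
  set c : ℝ := 1 / Real.sqrt (4 * Real.pi * γ) with hc
  -- integrability of the Gaussian density
  have hg_int : Integrable (fun x : ℝ => Real.exp (-(x - γ) ^ 2 / (4 * γ))) := by
    have hfun : (fun x : ℝ => Real.exp (-(x - γ) ^ 2 / (4 * γ)))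
        = fun x : ℝ => Real.exp (-(1/(4*γ)) * (x-γ)^2) := by
      funext x; congr 1; field_simp
    rw [hfun]
    exact (integrable_exp_neg_mul_sq hb).comp_sub_right γ
  -- Gaussian normalization
  have hgauss : ∫ x : ℝ, Real.exp (-(x - γ) ^ 2 / (4 * γ)) = Real.sqrt (4 * Real.pi * γ) := by
    have h1 : ∀ x : ℝ, Real.exp (-(x - γ) ^ 2 / (4 * γ))
        = (fun y : ℝ => Real.exp (-(1/(4*γ)) * y ^ 2)) (x - γ) := by
      intro x; simp only; congr 1; field_simp
    simp_rw [h1]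
    rw [integral_sub_right_eq_self (fun y : ℝ => Real.exp (-(1/(4*γ)) * y ^ 2)) γ,
      integral_gaussian]
    congr 1
    field_simp
  have hint1 : ∫ x : ℝ, c * Real.exp (-(x - γ) ^ 2 / (4 * γ)) = 1 := by
    rw [integral_const_mul, hgauss, hc]
    rw [one_div, inv_mul_cancel₀]
    positivity
  -- integrability of tanh * gaussian
  have htanh_int : Integrable (fun x : ℝ =>
      Real.tanh (x / 2) * (c * Real.exp (-(x - γ) ^ 2 / (4 * γ)))) := by
    have hcont : Continuous Real.tanh := by
      have : Real.tanh = fun t => Real.sinh t / Real.cosh t := funext Real.tanh_eq_sinh_div_cosh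
      rw [this]
      exact Real.continuous_sinh.div Real.continuous_cosh fun t => (Real.cosh_pos t).ne'
    refine (hg_int.const_mul c).bdd_mul (c := 1) ?_ (Filter.Eventually.of_forall fun x => ?_)
    · exact (hcont.comp (continuous_id.div_const 2)).aestronglyMeasurable
    · rw [Real.norm_eq_abs, Real.tanh_eq_sinh_div_cosh, abs_div,
        abs_of_pos (Real.cosh_pos _), div_le_one (Real.cosh_pos _), Real.abs_sinh]
      exact (Real.sinh_lt_cosh _).le.trans (by rw [Real.cosh_abs])
  -- φ γ = ∫ (1 - tanh(x/2)) * g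
  have hphi : phi γ = ∫ x : ℝ,
      (c * Real.exp (-(x - γ) ^ 2 / (4 * γ))
        - Real.tanh (x / 2) * (c * Real.exp (-(x - γ) ^ 2 / (4 * γ)))) := by
    rw [integral_sub (hg_int.const_mul c) htanh_int, hint1, phi, psi]
    congr 1
    apply integral_congr_ae
    exact Filter.Eventually.of_forall fun x => by ring
  rw [hphi, ← integral_const_mul]
  apply integral_congr_ae
  refine Filter.Eventually.of_forall fun x => ?_
  simp only
  -- key pointwise identities
  have htanh : 1 - Real.tanh (x/2) = 2 / (Real.exp x + 1) := by
    rw [Real.tanh_eq_sinh_div_cosh, Real.sinh_eq, Real.cosh_eq]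
    have h1 : Real.exp (x/2) + Real.exp (-(x/2)) > 0 := by positivity
    have h : Real.exp (-(x/2)) * Real.exp x = Real.exp (x/2) := by
      rw [← Real.exp_add]; congr 1; ring
    have h2 : Real.exp x + 1 > 0 := by positivity
    have h' : Real.exp (-x/2) * Real.exp x = Real.exp (x/2) := by
      rw [← Real.exp_add]; congr 1; ring
    field_simp
    linear_combination 2 * h
  have hexp : Real.exp (-(x - γ) ^ 2 / (4 * γ))
      = Real.exp (-γ/4) * Real.exp (x/2) * Real.exp (-x^2/(4*γ)) := by
    rw [← Real.exp_add, ← Real.exp_add]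
    congr 1
    field_simp
    ring
  have hc2 : c = 1 / (2 * Real.sqrt (Real.pi * γ)) := by
    rw [hc]
    congr 1
    rw [show (4 : ℝ) * Real.pi * γ = 2^2 * (Real.pi * γ) by ring, Real.sqrt_mul (by positivity),
      Real.sqrt_sq (by norm_num)]
  have hsq : (0:ℝ) < Real.sqrt (Real.pi * γ) := Real.sqrt_pos.mpr (by positivity)
  have hex : (0:ℝ) < Real.exp x + 1 := by positivity
  calc c * Real.exp (-(x - γ) ^ 2 / (4 * γ))
        - Real.tanh (x / 2) * (c * Real.exp (-(x - γ) ^ 2 / (4 * γ)))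
      = (1 - Real.tanh (x/2)) * (c * Real.exp (-(x - γ) ^ 2 / (4 * γ))) := by ring
    _ = (2 / (Real.exp x + 1)) * ((1 / (2 * Real.sqrt (Real.pi * γ))) *
          (Real.exp (-γ/4) * Real.exp (x/2) * Real.exp (-x^2/(4*γ)))) := by
        rw [htanh, hexp, hc2]
    _ = Real.exp (-γ / 4) / Real.sqrt (Real.pi * γ) *
          (Real.exp (x / 2) / (Real.exp x + 1) * Real.exp (-x ^ 2 / (4 * γ))) := by
        field_simp
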